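/- (Embedded logical X operators span the X-logical space.) Every α ∈ F₂^((V × V) ⊕ (C × C)) satisfying α · H_Zᵗ = 0 lies in the span of: the rows of H_X, the vectors (x ⊗ y | 0) with x ∈ F₂^V satisfying H·x = 0 and y ∈ F₂^V arbitrary, and the vectors (0 | y' ⊗ x') with x' ∈ F₂^C satisfying Hᵗ·x' = 0 and y' ∈ F₂^C arbitrary. -/

import Mathlib

open Matrix Kronecker

variable {V C : Type*} [Fintype V] [Fintype C] [DecidableEq V] [DecidableEq C]

/-- X-stabilizer matrix `H_X = (1_V ⊗ H | Hᵗ ⊗ 1_C)` of the hypergraph product of `H`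
with itself. Rows are indexed by `V × C`, column blocks by `V × V` and `C × C`. -/
def HX (H : Matrix C V (ZMod 2)) : Matrix (V × C) ((V × V) ⊕ (C × C)) (ZMod 2) :=
  Matrix.fromCols ((1 : Matrix V V (ZMod 2)) ⊗ₖ H) (Hᵀ ⊗ₖ (1 : Matrix C C (ZMod 2)))

/-- Z-stabilizer matrix `H_Z = (H ⊗ 1_V | 1_C ⊗ Hᵗ)`. Rows are indexed by `C × V`. -/
def HZ (H : Matrix C V (ZMod 2)) : Matrix (C × V) ((V × V) ⊕ (C × C)) (ZMod 2) :=
  Matrix.fromCols (H ⊗ₖ (1 : Matrix V V (ZMod 2))) ((1 : Matrix C C (ZMod 2)) ⊗ₖ Hᵀ)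

/-- Factorization lemma: if `ker f ≤ ker n` and `range n ≤ range f`, then `n = f ∘ m ∘ f`
for some linear map `m`. -/
lemma exists_factor_aux {K V W : Type*} [Field K] [AddCommGroup V] [Module K V]
    [AddCommGroup W] [Module K W] (f n : V →ₗ[K] W)
    (hker : LinearMap.ker f ≤ LinearMap.ker n)
    (hran : LinearMap.range n ≤ LinearMap.range f) :
    ∃ m : W →ₗ[K] V, f ∘ₗ m ∘ₗ f = n := by
  obtain ⟨s, hs⟩ := f.rangeRestrict.exists_rightInverse_of_surjective f.range_rangeRestrict
  obtain ⟨U, hU⟩ := Submodule.exists_isCompl (LinearMap.range f)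
  have hfs : ∀ w : LinearMap.range f, f (s w) = (w : W) := by
    intro w
    have := LinearMap.congr_fun hs w
    exact congrArg Subtype.val this
  refine ⟨s ∘ₗ (n.codRestrict (LinearMap.range f) (fun v => hran ⟨v, rfl⟩)) ∘ₗ s ∘ₗ
    (LinearMap.range f).linearProjOfIsCompl U hU, ?_⟩
  ext v
  simp only [LinearMap.comp_apply]
  have h1 : ((LinearMap.range f).linearProjOfIsCompl U hU) (f v) = ⟨f v, ⟨v, rfl⟩⟩ :=
    Submodule.linearProjOfIsCompl_apply_left hU ⟨f v, ⟨v, rfl⟩⟩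
  rw [h1]
  set v' := s ⟨f v, ⟨v, rfl⟩⟩ with hv'
  have hfv' : f v' = f v := hfs _
  have hnv' : n v' = n v := by
    have : v' - v ∈ LinearMap.ker f := by simp [LinearMap.mem_ker, map_sub, hfv']
    have := hker this
    rw [LinearMap.mem_ker, map_sub, sub_eq_zero] at this
    exact this
  have : (n.codRestrict (LinearMap.range f) (fun v => hran ⟨v, rfl⟩)) v' =
      ⟨n v, hran ⟨v, rfl⟩⟩ := by
    ext; simp [LinearMap.codRestrict_apply, hnv']
  rw [this, hfs]

/-- Matrix form: if `H A = B H` then `H A = H M H` for some `M`. -/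
lemma exists_mid_aux {K V C : Type*} [Field K] [Fintype V] [Fintype C] [DecidableEq V]
    [DecidableEq C] (H : Matrix C V K) (A : Matrix V V K) (B : Matrix C C K)
    (hAB : H * A = B * H) : ∃ M : Matrix V C K, H * M * H = H * A := by
  have h1 : LinearMap.ker (Matrix.toLin' H) ≤ LinearMap.ker (Matrix.toLin' (H * A)) := by
    intro x hx
    rw [LinearMap.mem_ker, Matrix.toLin'_apply] at hx ⊢
    rw [hAB, ← Matrix.mulVec_mulVec, hx, Matrix.mulVec_zero]
  have h2 : LinearMap.range (Matrix.toLin' (H * A)) ≤ LinearMap.range (Matrix.toLin' H) := by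
    rintro _ ⟨x, rfl⟩
    exact ⟨A.mulVec x, by rw [Matrix.toLin'_apply, Matrix.toLin'_apply, Matrix.mulVec_mulVec]⟩
  obtain ⟨m, hm⟩ := exists_factor_aux (Matrix.toLin' H) (Matrix.toLin' (H * A)) h1 h2
  refine ⟨LinearMap.toMatrix' m, ?_⟩
  apply Matrix.toLin'.injective
  rw [Matrix.toLin'_mul, Matrix.toLin'_mul, Matrix.toLin'_toMatrix', ← hm, LinearMap.comp_assoc]

lemma stab_sum (H : Matrix C V (ZMod 2)) (M : Matrix V C (ZMod 2)) :
    Sum.elim (fun p : V × V => (M * H) p.1 p.2) (fun p : C × C => (H * M) p.1 p.2)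
      = ∑ p : V × C, M p.1 p.2 • HX H p := by
  funext j
  rw [Finset.sum_apply]
  cases j with
  | inl q =>
    simp only [Sum.elim_inl, Pi.smul_apply, HX, Matrix.fromCols, Matrix.of_apply,
      Matrix.kroneckerMap_apply, Matrix.one_apply, smul_eq_mul, Fintype.sum_prod_type,
      Matrix.mul_apply, mul_ite, mul_one, mul_zero, ite_mul, zero_mul, one_mul]
    have hpull : ∀ x : V, (∑ y : C, if x = q.1 then M x y * H y q.2 else 0)
        = if x = q.1 then ∑ y : C, M x y * H y q.2 else 0 := by
      intro x; split <;> simp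
    rw [Finset.sum_congr rfl fun x _ => hpull x, Finset.sum_ite_eq' Finset.univ q.1]
    simp
  | inr q =>
    simp only [Sum.elim_inr, Pi.smul_apply, HX, Matrix.fromCols, Matrix.of_apply,
      Matrix.kroneckerMap_apply, Matrix.one_apply, smul_eq_mul, Fintype.sum_prod_type,
      Matrix.mul_apply, Matrix.transpose_apply, mul_ite, mul_one, mul_zero, ite_mul, zero_mul]
    rw [Finset.sum_congr rfl fun x _ => Finset.sum_ite_eq' Finset.univ q.2
      (fun y => M x y * H q.1 x)]
    simp [mul_comm]

/-- Embedded logical X operators span the X-logical space: every `α` with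
`α · H_Zᵗ = 0` lies in the span of the rows of `H_X`, the vectors `(x ⊗ y | 0)` with
`H·x = 0`, and the vectors `(0 | y' ⊗ x')` with `Hᵗ·x' = 0`. -/
theorem stmt_3 (H : Matrix C V (ZMod 2)) (α : (V × V) ⊕ (C × C) → ZMod 2)
    (hα : Matrix.vecMul α (HZ H)ᵀ = 0) :
    α ∈ Submodule.span (ZMod 2)
      (Set.range (HX H) ∪
       {w : (V × V) ⊕ (C × C) → ZMod 2 | ∃ x y : V → ZMod 2, H.mulVec x = 0 ∧
          w = Sum.elim (fun p : V × V => x p.1 * y p.2) (fun _ : C × C => 0)} ∪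
       {w : (V × V) ⊕ (C × C) → ZMod 2 | ∃ x' y' : C → ZMod 2, Hᵀ.mulVec x' = 0 ∧
          w = Sum.elim (fun _ : V × V => 0) (fun p : C × C => y' p.1 * x' p.2)}) := by
  classical
  set A : Matrix V V (ZMod 2) := fun v1 v2 => α (Sum.inl (v1, v2)) with hA
  set B : Matrix C C (ZMod 2) := fun c1 c2 => α (Sum.inr (c1, c2)) with hB
  -- Step 1: the commutation relation `H A = B H`.
  have key : H * A = B * H := by
    ext c v
    have h0 : ∑ j, α j * HZ H (c, v) j = 0 := by
      have := congrFun hα (c, v)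
      simpa [Matrix.vecMul, dotProduct, Matrix.transpose_apply] using this
    rw [Fintype.sum_sum_type] at h0
    have e1 : ∑ p : V × V, α (Sum.inl p) * HZ H (c, v) (Sum.inl p) = (H * A) c v := by
      simp only [HZ, Matrix.fromCols, Matrix.of_apply, Sum.elim_inl,
        Matrix.kroneckerMap_apply, Matrix.one_apply, Fintype.sum_prod_type,
        Matrix.mul_apply, hA, mul_ite, mul_one, mul_zero, ite_mul, zero_mul]
      rw [Finset.sum_congr rfl fun v1 _ => Finset.sum_ite_eq (Finset.univ) v
        (fun v2 => α (Sum.inl (v1, v2)) * H c v1)]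
      simp [mul_comm]
      rfl
    have e2 : ∑ p : C × C, α (Sum.inr p) * HZ H (c, v) (Sum.inr p) = (B * H) c v := by
      simp only [HZ, Matrix.fromCols, Matrix.of_apply, Sum.elim_inr,
        Matrix.kroneckerMap_apply, Matrix.one_apply, Fintype.sum_prod_type,
        Matrix.mul_apply, hB, mul_ite, mul_one, mul_zero, ite_mul, zero_mul, one_mul]
      have hpull : ∀ x : C, (∑ y : C, if c = x then α (Sum.inr (x, y)) * Hᵀ v y else 0)
          = if c = x then ∑ y : C, α (Sum.inr (x, y)) * Hᵀ v y else 0 := by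
        intro x; split <;> simp
      rw [Finset.sum_congr rfl fun x _ => hpull x, Finset.sum_ite_eq]
      simp [Matrix.transpose_apply]
      rfl
    rw [e1, e2] at h0
    rw [add_eq_zero_iff_eq_neg] at h0
    simpa [CharTwo.neg_eq] using h0
  -- Step 2: find `M` with `H M H = H A = B H`.
  obtain ⟨M, hM⟩ := exists_mid_aux H A B key
  set K : Matrix V V (ZMod 2) := A - M * H with hKdef
  set L : Matrix C C (ZMod 2) := B - H * M with hLdef
  have hK : H * K = 0 := by
    rw [hKdef, Matrix.mul_sub, ← Matrix.mul_assoc, hM, sub_self]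
  have hL : L * H = 0 := by
    rw [hLdef, Matrix.sub_mul, hM, key, sub_self]
  -- Step 3: split α into stabilizer + kernel parts.
  have hsplit : α
      = Sum.elim (fun p : V × V => (M * H) p.1 p.2) (fun p : C × C => (H * M) p.1 p.2)
      + Sum.elim (fun p : V × V => K p.1 p.2) (fun _ : C × C => (0 : ZMod 2))
      + Sum.elim (fun _ : V × V => (0 : ZMod 2)) (fun p : C × C => L p.1 p.2) := by
    funext j
    cases j with
    | inl p =>
      simp only [Pi.add_apply, Sum.elim_inl, hKdef, Matrix.sub_apply]
      ring_nf
      rfl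
    | inr p =>
      simp only [Pi.add_apply, Sum.elim_inr, hLdef, Matrix.sub_apply]
      ring_nf
      rfl
  rw [hsplit]
  refine Submodule.add_mem _ (Submodule.add_mem _ ?m1 ?m2) ?m3
  · -- stabilizer part
    rw [stab_sum H M]
    exact Submodule.sum_mem _ fun p _ => Submodule.smul_mem _ _
      (Submodule.subset_span (Or.inl (Or.inl ⟨p, rfl⟩)))
  · -- left logical part
    have hdecomp : Sum.elim (fun p : V × V => K p.1 p.2) (fun _ : C × C => (0 : ZMod 2))
        = ∑ y : V, Sum.elim
            (fun p : V × V => K p.1 y * (if p.2 = y then (1 : ZMod 2) else 0))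
            (fun _ : C × C => (0 : ZMod 2)) := by
      funext j
      rw [Finset.sum_apply]
      cases j with
      | inl p => simp [mul_ite, Finset.sum_ite_eq Finset.univ p.2 (fun y => K p.1 y)]
      | inr p => simp
    rw [hdecomp]
    refine Submodule.sum_mem _ fun y _ => Submodule.subset_span (Or.inl (Or.inr ?_))
    refine ⟨fun v1 => K v1 y, fun v2 => if v2 = y then 1 else 0, ?_, rfl⟩
    funext c
    have := congrFun (congrFun hK c) y
    simpa [Matrix.mulVec, dotProduct, Matrix.mul_apply] using this
  · -- right logical part
    have hdecomp : Sum.elim (fun _ : V × V => (0 : ZMod 2)) (fun p : C × C => L p.1 p.2)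
        = ∑ r : C, Sum.elim (fun _ : V × V => (0 : ZMod 2))
            (fun p : C × C => (if p.1 = r then (1 : ZMod 2) else 0) * L r p.2) := by
      funext j
      rw [Finset.sum_apply]
      cases j with
      | inl p => simp
      | inr p => simp [ite_mul, Finset.sum_ite_eq Finset.univ p.1 (fun r => L r p.2)]
    rw [hdecomp]
    refine Submodule.sum_mem _ fun r _ => Submodule.subset_span (Or.inr ?_)
    refine ⟨fun c => L r c, fun c1 => if c1 = r then 1 else 0, ?_, rfl⟩
    funext v
    have := congrFun (congrFun hL r) v
    simpa [Matrix.mulVec, dotProduct, Matrix.mul_apply, Matrix.transpose_apply,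
      mul_comm] using this
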